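/- Let A, X, Y, Z be jointly distributed finite discrete random variables with P(a,x,y,z) = P(y|a,z)·P(z|a,x)·P(x)·P(a) (the instrumental causal structure). Then the observed marginal distribution of (X,Y,Z) satisfies I(X:Y,Z) ≤ H(Z). -/

import Mathlib

open Finset

/-- Probability that the random variable `X` takes value `x`, for weights `μ`. -/
noncomputable def prob {Ω α : Type} [Fintype Ω] [Fintype α] [DecidableEq α]
    (μ : Ω → ℝ) (X : Ω → α) (x : α) : ℝ :=
  ∑ ω, if X ω = x then μ ω else 0

/-- Shannon entropy (base 2) of a finite discrete random variable,
with the convention `0 * log₂ 0 = 0` (since `Real.logb 2 0 = 0`). -/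
noncomputable def ent {Ω α : Type} [Fintype Ω] [Fintype α] [DecidableEq α]
    (μ : Ω → ℝ) (X : Ω → α) : ℝ :=
  -∑ x, prob μ X x * Real.logb 2 (prob μ X x)

/-- `μ` is a probability mass function on the finite sample space `Ω`. -/
def IsPMF {Ω : Type} [Fintype Ω] (μ : Ω → ℝ) : Prop :=
  (∀ ω, 0 ≤ μ ω) ∧ ∑ ω, μ ω = 1

/-- Mutual information `I(X:Y) = H(X) + H(Y) - H(X,Y)`. -/
noncomputable def mutualInfo {Ω α β : Type} [Fintype Ω] [Fintype α] [Fintype β]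
    [DecidableEq α] [DecidableEq β] (μ : Ω → ℝ) (X : Ω → α) (Y : Ω → β) : ℝ :=
  ent μ X + ent μ Y - ent μ (fun ω => (X ω, Y ω))

/-- Conditional mutual information
`I(X:Y|Z) = H(X,Z) + H(Y,Z) - H(Z) - H(X,Y,Z)`. -/
noncomputable def condMutualInfo {Ω α β γ : Type} [Fintype Ω] [Fintype α] [Fintype β]
    [Fintype γ] [DecidableEq α] [DecidableEq β] [DecidableEq γ]
    (μ : Ω → ℝ) (X : Ω → α) (Y : Ω → β) (Z : Ω → γ) : ℝ :=
  ent μ (fun ω => (X ω, Z ω)) + ent μ (fun ω => (Y ω, Z ω)) - ent μ Z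
    - ent μ (fun ω => (X ω, Y ω, Z ω))

/-- Conditional entropy `H(X|Y) = H(X,Y) - H(Y)`. -/
noncomputable def condEnt {Ω α β : Type} [Fintype Ω] [Fintype α] [Fintype β]
    [DecidableEq α] [DecidableEq β] (μ : Ω → ℝ) (X : Ω → α) (Y : Ω → β) : ℝ :=
  ent μ (fun ω => (X ω, Y ω)) - ent μ Y


namespace IA

variable {Ω α β γ : Type} [Fintype Ω] [Fintype α] [Fintype β] [Fintype γ]
  [DecidableEq α] [DecidableEq β] [DecidableEq γ]

lemma prob_nonneg (μ : Ω → ℝ) (h : ∀ ω, 0 ≤ μ ω) (X : Ω → α) (xv : α) :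
    0 ≤ prob μ X xv :=
  Finset.sum_nonneg fun ω _ => by by_cases hc : X ω = xv <;> simp [hc, h ω]

lemma sum_prob (μ : Ω → ℝ) (X : Ω → α) : ∑ xv, prob μ X xv = ∑ ω, μ ω := by
  unfold prob
  rw [Finset.sum_comm]
  simp

lemma prob_comp (μ : Ω → ℝ) (X : Ω → α) (f : α → β) (b : β) :
    prob μ (fun ω => f (X ω)) b = ∑ av, if f av = b then prob μ X av else 0 := by
  unfold prob
  have h : ∀ av : α, (if f av = b then ∑ ω, (if X ω = av then μ ω else 0) else 0)
      = ∑ ω, if X ω = av then (if f av = b then μ ω else 0) else 0 := by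
    intro av
    split
    · exact Finset.sum_congr rfl fun ω _ => by split <;> simp_all
    · simp_all
  simp only [h]
  rw [Finset.sum_comm]
  apply Finset.sum_congr rfl
  intro ω _
  simp

lemma prob_comp_apply (μ : Ω → ℝ) (X : Ω → α) (f : α → β) (hf : Function.Injective f)
    (a0 : α) : prob μ (fun ω => f (X ω)) (f a0) = prob μ X a0 := by
  conv_lhs => rw [prob_comp]
  rw [Finset.sum_congr rfl (fun av (_ : av ∈ Finset.univ) =>
    if_congr (hf.eq_iff) rfl rfl)]
  simp

lemma prob_comp_le (μ : Ω → ℝ) (h : ∀ ω, 0 ≤ μ ω) (X : Ω → α) (f : α → β) (a0 : α) :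
    prob μ X a0 ≤ prob μ (fun ω => f (X ω)) (f a0) := by
  conv_rhs => rw [prob_comp]
  have h1 : (if f a0 = f a0 then prob μ X a0 else 0)
      ≤ ∑ av, if f av = f a0 then prob μ X av else 0 :=
    Finset.single_le_sum (f := fun av => if f av = f a0 then prob μ X av else 0)
      (fun i _ => by split <;> [exact prob_nonneg μ h X i; rfl])
      (Finset.mem_univ a0)
  rw [if_pos rfl] at h1
  exact h1

lemma ent_comp_eq (μ : Ω → ℝ) (X : Ω → α) (f : α → β) :
    ent μ (fun ω => f (X ω)) =
      -∑ av, prob μ X av * Real.logb 2 (prob μ (fun ω => f (X ω)) (f av)) := by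
  unfold ent
  congr 1
  have h : ∀ bv : β, prob μ (fun ω => f (X ω)) bv
        * Real.logb 2 (prob μ (fun ω => f (X ω)) bv)
      = ∑ av, if f av = bv then
          prob μ X av * Real.logb 2 (prob μ (fun ω => f (X ω)) (f av)) else 0 := by
    intro bv
    rw [prob_comp, Finset.sum_mul]
    apply Finset.sum_congr rfl
    intro av _
    split
    · next hc => rw [hc, ← prob_comp]
    · simp
  simp only [h]
  rw [Finset.sum_comm]
  apply Finset.sum_congr rfl
  intro av _
  simp

lemma ent_congr (μ : Ω → ℝ) (e : α ≃ β) (X : Ω → α) (Y : Ω → β)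
    (h : ∀ ω, Y ω = e (X ω)) : ent μ Y = ent μ X := by
  have hp : ∀ bv, prob μ Y bv = prob μ X (e.symm bv) := by
    intro bv
    unfold prob
    apply Finset.sum_congr rfl
    intro ω _
    have hiff : Y ω = bv ↔ X ω = e.symm bv := by
      rw [h ω]
      exact e.apply_eq_iff_eq_symm_apply
    simp only [hiff]
  unfold ent
  rw [Finset.sum_congr rfl (fun bv (_ : bv ∈ Finset.univ) => by rw [hp bv])]
  congr 1
  exact Equiv.sum_comp e.symm (fun av => prob μ X av * Real.logb 2 (prob μ X av))


lemma gibbs {ι : Type} [Fintype ι] (p q : ι → ℝ) (hp : ∀ i, 0 ≤ p i) (hq : ∀ i, 0 ≤ q i)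
    (hd : ∀ i, 0 < p i → 0 < q i) (hsum : ∑ i, q i ≤ ∑ i, p i) :
    0 ≤ ∑ i, p i * (Real.logb 2 (p i) - Real.logb 2 (q i)) := by
  have hlog2 : (0:ℝ) < Real.log 2 := Real.log_pos (by norm_num)
  have hterm : ∀ i, (if 0 < p i then p i - q i else 0)
      ≤ p i * (Real.log (p i) - Real.log (q i)) := by
    intro i
    split
    · next h0 =>
      have hqi := hd i h0
      have hlog : Real.log (q i / p i) ≤ q i / p i - 1 :=
        Real.log_le_sub_one_of_pos (div_pos hqi h0)
      rw [Real.log_div (ne_of_gt hqi) (ne_of_gt h0)] at hlog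
      have := mul_le_mul_of_nonneg_left hlog (le_of_lt h0)
      have h3 : p i * (q i / p i - 1) = q i - p i := by field_simp
      nlinarith
    · next h0 =>
      have hzero : p i = 0 := le_antisymm (not_lt.mp h0) (hp i)
      simp [hzero]
  have hlow : ∀ i, p i - q i ≤ (if 0 < p i then p i - q i else 0) := by
    intro i
    split
    · exact le_refl _
    · next h0 =>
      have hzero : p i = 0 := le_antisymm (not_lt.mp h0) (hp i)
      rw [hzero]
      linarith [hq i]
  have hnat : 0 ≤ ∑ i, p i * (Real.log (p i) - Real.log (q i)) := by
    calc (0:ℝ) = ∑ i, p i - ∑ i, q i - (∑ i, p i - ∑ i, q i) := by ring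
    _ ≤ ∑ i, (p i - q i) := by rw [Finset.sum_sub_distrib]; linarith
    _ ≤ ∑ i, (if 0 < p i then p i - q i else 0) := Finset.sum_le_sum fun i _ => hlow i
    _ ≤ _ := Finset.sum_le_sum fun i _ => hterm i
  calc (0:ℝ) ≤ (∑ i, p i * (Real.log (p i) - Real.log (q i))) / Real.log 2 :=
        div_nonneg hnat hlog2.le
  _ = ∑ i, p i * (Real.logb 2 (p i) - Real.logb 2 (q i)) := by
      rw [Finset.sum_div]
      exact Finset.sum_congr rfl fun i _ => by rw [Real.logb, Real.logb]; ring


lemma sum_if_const {κ : Type} [Fintype κ] (c : Prop) [Decidable c] (f : κ → ℝ) :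
    ∑ k, (if c then f k else 0) = if c then (∑ k, f k) else 0 := by
  split <;> simp

lemma marg_fst (μ : Ω → ℝ) (X : Ω → α) (Z : Ω → γ) (zv : γ) :
    ∑ av, prob μ (fun ω => (X ω, Z ω)) (av, zv) = prob μ Z zv := by
  have h : prob μ Z zv = ∑ w : α × γ, if w.2 = zv then prob μ (fun ω => (X ω, Z ω)) w else 0 :=
    prob_comp μ (fun ω => (X ω, Z ω)) (fun w => w.2) zv
  rw [h, Fintype.sum_prod_type]
  apply Finset.sum_congr rfl
  intro av _
  simp

lemma marg_snd (μ : Ω → ℝ) (X : Ω → α) (Z : Ω → γ) (xv : α) :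
    ∑ zv, prob μ (fun ω => (X ω, Z ω)) (xv, zv) = prob μ X xv := by
  have h : prob μ X xv = ∑ w : α × γ, if w.1 = xv then prob μ (fun ω => (X ω, Z ω)) w else 0 :=
    prob_comp μ (fun ω => (X ω, Z ω)) (fun w => w.1) xv
  rw [h, Fintype.sum_prod_type]
  rw [Finset.sum_comm]
  apply Finset.sum_congr rfl
  intro zv _
  simp

lemma comb4 {ι : Type} [Fintype ι] (f g h k : ι → ℝ) :
    (-∑ w, f w) + (-∑ w, g w) - (-∑ w, h w) - (-∑ w, k w)
      = ∑ w, (h w + k w - f w - g w) := by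
  simp only [Finset.sum_sub_distrib, Finset.sum_add_distrib]
  ring

lemma cmi_eq_sum (μ : Ω → ℝ) (X : Ω → α) (Y : Ω → β) (Z : Ω → γ) :
    condMutualInfo μ X Y Z = ∑ w : α × β × γ,
      prob μ (fun ω => (X ω, Y ω, Z ω)) w *
        (Real.logb 2 (prob μ (fun ω => (X ω, Y ω, Z ω)) w)
          + Real.logb 2 (prob μ Z w.2.2)
          - Real.logb 2 (prob μ (fun ω => (X ω, Z ω)) (w.1, w.2.2))
          - Real.logb 2 (prob μ (fun ω => (Y ω, Z ω)) (w.2.1, w.2.2))) := by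
  have h1 : ent μ (fun ω => (X ω, Z ω)) = -∑ w : α × β × γ,
      prob μ (fun ω => (X ω, Y ω, Z ω)) w *
        Real.logb 2 (prob μ (fun ω => (X ω, Z ω)) (w.1, w.2.2)) :=
    ent_comp_eq μ (fun ω => (X ω, Y ω, Z ω)) (fun w => (w.1, w.2.2))
  have h2 : ent μ (fun ω => (Y ω, Z ω)) = -∑ w : α × β × γ,
      prob μ (fun ω => (X ω, Y ω, Z ω)) w *
        Real.logb 2 (prob μ (fun ω => (Y ω, Z ω)) (w.2.1, w.2.2)) :=
    ent_comp_eq μ (fun ω => (X ω, Y ω, Z ω)) (fun w => (w.2.1, w.2.2))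
  have h3 : ent μ Z = -∑ w : α × β × γ,
      prob μ (fun ω => (X ω, Y ω, Z ω)) w * Real.logb 2 (prob μ Z w.2.2) :=
    ent_comp_eq μ (fun ω => (X ω, Y ω, Z ω)) (fun w => w.2.2)
  have h4 : ent μ (fun ω => (X ω, Y ω, Z ω)) = -∑ w : α × β × γ,
      prob μ (fun ω => (X ω, Y ω, Z ω)) w *
        Real.logb 2 (prob μ (fun ω => (X ω, Y ω, Z ω)) w) := rfl
  unfold condMutualInfo
  rw [h1, h2, h3, h4, comb4]
  apply Finset.sum_congr rfl
  intro w _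
  ring

lemma mi_eq_sum (μ : Ω → ℝ) (X : Ω → α) (Y : Ω → β) :
    mutualInfo μ X Y = ∑ w : α × β,
      prob μ (fun ω => (X ω, Y ω)) w *
        (Real.logb 2 (prob μ (fun ω => (X ω, Y ω)) w)
          - Real.logb 2 (prob μ X w.1)
          - Real.logb 2 (prob μ Y w.2)) := by
  have h1 : ent μ X = -∑ w : α × β,
      prob μ (fun ω => (X ω, Y ω)) w * Real.logb 2 (prob μ X w.1) :=
    ent_comp_eq μ (fun ω => (X ω, Y ω)) (fun w => w.1)
  have h2 : ent μ Y = -∑ w : α × β,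
      prob μ (fun ω => (X ω, Y ω)) w * Real.logb 2 (prob μ Y w.2) :=
    ent_comp_eq μ (fun ω => (X ω, Y ω)) (fun w => w.2)
  have h3 : ent μ (fun ω => (X ω, Y ω)) = -∑ w : α × β,
      prob μ (fun ω => (X ω, Y ω)) w *
        Real.logb 2 (prob μ (fun ω => (X ω, Y ω)) w) := rfl
  have comb3 : ∀ (f g k : α × β → ℝ),
      (-∑ w, f w) + (-∑ w, g w) - (-∑ w, k w) = ∑ w, (k w - f w - g w) := by
    intro f g k
    simp only [Finset.sum_sub_distrib]
    ring
  unfold mutualInfo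
  rw [h1, h2, h3, comb3]
  apply Finset.sum_congr rfl
  intro w _
  ring


lemma cmi_nonneg (μ : Ω → ℝ) (hμ0 : ∀ ω, 0 ≤ μ ω) (hμ1 : ∑ ω, μ ω = 1)
    (X : Ω → α) (Y : Ω → β) (Z : Ω → γ) : 0 ≤ condMutualInfo μ X Y Z := by
  classical
  have key : condMutualInfo μ X Y Z = ∑ w : α × β × γ,
      prob μ (fun ω => (X ω, Y ω, Z ω)) w *
        (Real.logb 2 (prob μ (fun ω => (X ω, Y ω, Z ω)) w)
          - Real.logb 2 (prob μ (fun ω => (X ω, Z ω)) (w.1, w.2.2)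
              * prob μ (fun ω => (Y ω, Z ω)) (w.2.1, w.2.2) / prob μ Z w.2.2)) := by
    rw [cmi_eq_sum]
    apply Finset.sum_congr rfl
    intro w _
    by_cases hw : 0 < prob μ (fun ω => (X ω, Y ω, Z ω)) w
    · have hxz : 0 < prob μ (fun ω => (X ω, Z ω)) (w.1, w.2.2) :=
        lt_of_lt_of_le hw (prob_comp_le μ hμ0 (fun ω => (X ω, Y ω, Z ω))
          (fun v => (v.1, v.2.2)) w)
      have hyz : 0 < prob μ (fun ω => (Y ω, Z ω)) (w.2.1, w.2.2) :=
        lt_of_lt_of_le hw (prob_comp_le μ hμ0 (fun ω => (X ω, Y ω, Z ω))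
          (fun v => (v.2.1, v.2.2)) w)
      have hz : 0 < prob μ Z w.2.2 :=
        lt_of_lt_of_le hw (prob_comp_le μ hμ0 (fun ω => (X ω, Y ω, Z ω)) (fun v => v.2.2) w)
      rw [Real.logb_div (by positivity) (ne_of_gt hz),
        Real.logb_mul (ne_of_gt hxz) (ne_of_gt hyz)]
      ring
    · have h0 : prob μ (fun ω => (X ω, Y ω, Z ω)) w = 0 :=
        le_antisymm (not_lt.mp hw) (prob_nonneg μ hμ0 _ w)
      rw [h0]; ring
  rw [key]
  apply gibbs
  · exact fun i => prob_nonneg μ hμ0 _ i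
  · intro i
    exact div_nonneg (mul_nonneg (prob_nonneg μ hμ0 _ _) (prob_nonneg μ hμ0 _ _))
      (prob_nonneg μ hμ0 _ _)
  · intro w hw
    have hxz : 0 < prob μ (fun ω => (X ω, Z ω)) (w.1, w.2.2) :=
      lt_of_lt_of_le hw (prob_comp_le μ hμ0 (fun ω => (X ω, Y ω, Z ω))
        (fun v => (v.1, v.2.2)) w)
    have hyz : 0 < prob μ (fun ω => (Y ω, Z ω)) (w.2.1, w.2.2) :=
      lt_of_lt_of_le hw (prob_comp_le μ hμ0 (fun ω => (X ω, Y ω, Z ω))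
        (fun v => (v.2.1, v.2.2)) w)
    have hz : 0 < prob μ Z w.2.2 :=
      lt_of_lt_of_le hw (prob_comp_le μ hμ0 (fun ω => (X ω, Y ω, Z ω)) (fun v => v.2.2) w)
    exact div_pos (mul_pos hxz hyz) hz
  · -- sum of q ≤ sum of p
    have e1 : ∑ w : α × β × γ,
        prob μ (fun ω => (X ω, Z ω)) (w.1, w.2.2)
          * prob μ (fun ω => (Y ω, Z ω)) (w.2.1, w.2.2) / prob μ Z w.2.2
        = ∑ zv, prob μ Z zv * prob μ Z zv / prob μ Z zv := by
      rw [Fintype.sum_prod_type]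
      have e2 : ∀ xv : α, (∑ w : β × γ,
          prob μ (fun ω => (X ω, Z ω)) (xv, w.2)
            * prob μ (fun ω => (Y ω, Z ω)) (w.1, w.2) / prob μ Z w.2)
          = ∑ zv, prob μ (fun ω => (X ω, Z ω)) (xv, zv) * prob μ Z zv / prob μ Z zv := by
        intro xv
        rw [Fintype.sum_prod_type, Finset.sum_comm]
        apply Finset.sum_congr rfl
        intro zv _
        dsimp only
        rw [← Finset.sum_div, ← Finset.mul_sum, marg_fst μ Y Z zv]
      rw [Finset.sum_congr rfl (fun xv (_ : xv ∈ Finset.univ) => e2 xv), Finset.sum_comm]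
      apply Finset.sum_congr rfl
      intro zv _
      rw [← Finset.sum_div, ← Finset.sum_mul, marg_fst μ X Z zv]
    rw [e1]
    have e3 : ∑ w : α × β × γ, prob μ (fun ω => (X ω, Y ω, Z ω)) w = 1 := by
      rw [sum_prob]; exact hμ1
    rw [e3]
    have e4 : ∑ zv, prob μ Z zv = 1 := by rw [sum_prob]; exact hμ1
    calc ∑ zv, prob μ Z zv * prob μ Z zv / prob μ Z zv ≤ ∑ zv, prob μ Z zv := by
          apply Finset.sum_le_sum
          intro zv _
          by_cases h : prob μ Z zv = 0
          · simp [h]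
          · rw [mul_div_assoc, div_self h, mul_one]
      _ = 1 := e4

lemma mi_nonneg (μ : Ω → ℝ) (hμ0 : ∀ ω, 0 ≤ μ ω) (hμ1 : ∑ ω, μ ω = 1)
    (X : Ω → α) (Y : Ω → β) : 0 ≤ mutualInfo μ X Y := by
  classical
  have key : mutualInfo μ X Y = ∑ w : α × β,
      prob μ (fun ω => (X ω, Y ω)) w *
        (Real.logb 2 (prob μ (fun ω => (X ω, Y ω)) w)
          - Real.logb 2 (prob μ X w.1 * prob μ Y w.2)) := by
    rw [mi_eq_sum]
    apply Finset.sum_congr rfl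
    intro w _
    by_cases hw : 0 < prob μ (fun ω => (X ω, Y ω)) w
    · have hx : 0 < prob μ X w.1 :=
        lt_of_lt_of_le hw (prob_comp_le μ hμ0 (fun ω => (X ω, Y ω)) (fun v => v.1) w)
      have hy : 0 < prob μ Y w.2 :=
        lt_of_lt_of_le hw (prob_comp_le μ hμ0 (fun ω => (X ω, Y ω)) (fun v => v.2) w)
      rw [Real.logb_mul (ne_of_gt hx) (ne_of_gt hy)]
      ring
    · have h0 : prob μ (fun ω => (X ω, Y ω)) w = 0 :=
        le_antisymm (not_lt.mp hw) (prob_nonneg μ hμ0 _ w)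
      rw [h0]; ring
  rw [key]
  apply gibbs
  · exact fun i => prob_nonneg μ hμ0 _ i
  · exact fun i => mul_nonneg (prob_nonneg μ hμ0 _ _) (prob_nonneg μ hμ0 _ _)
  · intro w hw
    exact mul_pos
      (lt_of_lt_of_le hw (prob_comp_le μ hμ0 (fun ω => (X ω, Y ω)) (fun v => v.1) w))
      (lt_of_lt_of_le hw (prob_comp_le μ hμ0 (fun ω => (X ω, Y ω)) (fun v => v.2) w))
  · have e1 : ∑ w : α × β, prob μ X w.1 * prob μ Y w.2 = 1 := by
      rw [Fintype.sum_prod_type]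
      have : ∀ xv, ∑ yv, prob μ X xv * prob μ Y yv = prob μ X xv := by
        intro xv
        rw [← Finset.mul_sum, sum_prob, hμ1, mul_one]
      rw [Finset.sum_congr rfl (fun xv (_ : xv ∈ Finset.univ) => this xv), sum_prob, hμ1]
    have e2 : ∑ w : α × β, prob μ (fun ω => (X ω, Y ω)) w = 1 := by
      rw [sum_prob]; exact hμ1
    rw [e1, e2]

lemma ent_mono (μ : Ω → ℝ) (hμ0 : ∀ ω, 0 ≤ μ ω) (X : Ω → α) (Y : Ω → β) :
    ent μ Y ≤ ent μ (fun ω => (X ω, Y ω)) := by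
  have h1 : ent μ Y = -∑ w : α × β,
      prob μ (fun ω => (X ω, Y ω)) w * Real.logb 2 (prob μ Y w.2) :=
    ent_comp_eq μ (fun ω => (X ω, Y ω)) (fun w => w.2)
  have h2 : ent μ (fun ω => (X ω, Y ω)) = -∑ w : α × β,
      prob μ (fun ω => (X ω, Y ω)) w *
        Real.logb 2 (prob μ (fun ω => (X ω, Y ω)) w) := rfl
  rw [h1, h2, neg_le_neg_iff]
  apply Finset.sum_le_sum
  intro w _
  by_cases hw : 0 < prob μ (fun ω => (X ω, Y ω)) w
  · have hy : prob μ (fun ω => (X ω, Y ω)) w ≤ prob μ Y w.2 :=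
      prob_comp_le μ hμ0 (fun ω => (X ω, Y ω)) (fun v => v.2) w
    exact mul_le_mul_of_nonneg_left
      (Real.logb_le_logb_of_le (by norm_num) hw hy) (le_of_lt hw)
  · have h0 : prob μ (fun ω => (X ω, Y ω)) w = 0 :=
      le_antisymm (not_lt.mp hw) (prob_nonneg μ hμ0 _ w)
    rw [h0, zero_mul, zero_mul]

lemma mi_eq_zero (μ : Ω → ℝ) (hμ0 : ∀ ω, 0 ≤ μ ω) (X : Ω → α) (Y : Ω → β)
    (hind : ∀ xv yv, prob μ (fun ω => (X ω, Y ω)) (xv, yv) = prob μ X xv * prob μ Y yv) :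
    mutualInfo μ X Y = 0 := by
  rw [mi_eq_sum]
  apply Finset.sum_eq_zero
  intro w _
  by_cases hw : 0 < prob μ (fun ω => (X ω, Y ω)) w
  · have hx : 0 < prob μ X w.1 :=
      lt_of_lt_of_le hw (prob_comp_le μ hμ0 (fun ω => (X ω, Y ω)) (fun v => v.1) w)
    have hy : 0 < prob μ Y w.2 :=
      lt_of_lt_of_le hw (prob_comp_le μ hμ0 (fun ω => (X ω, Y ω)) (fun v => v.2) w)
    have he : prob μ (fun ω => (X ω, Y ω)) w = prob μ X w.1 * prob μ Y w.2 := hind w.1 w.2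
    rw [he, Real.logb_mul (ne_of_gt hx) (ne_of_gt hy)]
    ring
  · have h0 : prob μ (fun ω => (X ω, Y ω)) w = 0 :=
      le_antisymm (not_lt.mp hw) (prob_nonneg μ hμ0 _ w)
    rw [h0, zero_mul]

lemma cmi_eq_zero (μ : Ω → ℝ) (hμ0 : ∀ ω, 0 ≤ μ ω) (X : Ω → α) (Y : Ω → β) (Z : Ω → γ)
    (hfac : ∀ xv yv zv,
      prob μ (fun ω => (X ω, Y ω, Z ω)) (xv, yv, zv) * prob μ Z zv
        = prob μ (fun ω => (X ω, Z ω)) (xv, zv) * prob μ (fun ω => (Y ω, Z ω)) (yv, zv)) :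
    condMutualInfo μ X Y Z = 0 := by
  rw [cmi_eq_sum]
  apply Finset.sum_eq_zero
  intro w _
  by_cases hw : 0 < prob μ (fun ω => (X ω, Y ω, Z ω)) w
  · have hxz : 0 < prob μ (fun ω => (X ω, Z ω)) (w.1, w.2.2) :=
      lt_of_lt_of_le hw (prob_comp_le μ hμ0 (fun ω => (X ω, Y ω, Z ω))
        (fun v => (v.1, v.2.2)) w)
    have hyz : 0 < prob μ (fun ω => (Y ω, Z ω)) (w.2.1, w.2.2) :=
      lt_of_lt_of_le hw (prob_comp_le μ hμ0 (fun ω => (X ω, Y ω, Z ω))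
        (fun v => (v.2.1, v.2.2)) w)
    have hz : 0 < prob μ Z w.2.2 :=
      lt_of_lt_of_le hw (prob_comp_le μ hμ0 (fun ω => (X ω, Y ω, Z ω)) (fun v => v.2.2) w)
    have he : prob μ (fun ω => (X ω, Y ω, Z ω)) w * prob μ Z w.2.2
        = prob μ (fun ω => (X ω, Z ω)) (w.1, w.2.2)
            * prob μ (fun ω => (Y ω, Z ω)) (w.2.1, w.2.2) := hfac w.1 w.2.1 w.2.2
    have hlog : Real.logb 2 (prob μ (fun ω => (X ω, Y ω, Z ω)) w)
          + Real.logb 2 (prob μ Z w.2.2)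
        = Real.logb 2 (prob μ (fun ω => (X ω, Z ω)) (w.1, w.2.2))
          + Real.logb 2 (prob μ (fun ω => (Y ω, Z ω)) (w.2.1, w.2.2)) := by
      rw [← Real.logb_mul (ne_of_gt hw) (ne_of_gt hz),
        ← Real.logb_mul (ne_of_gt hxz) (ne_of_gt hyz), he]
    rw [show Real.logb 2 (prob μ (fun ω => (X ω, Y ω, Z ω)) w)
          + Real.logb 2 (prob μ Z w.2.2)
          - Real.logb 2 (prob μ (fun ω => (X ω, Z ω)) (w.1, w.2.2))
          - Real.logb 2 (prob μ (fun ω => (Y ω, Z ω)) (w.2.1, w.2.2)) = 0 from by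
        rw [sub_sub, hlog]; ring]
    rw [mul_zero]
  · have h0 : prob μ (fun ω => (X ω, Y ω, Z ω)) w = 0 :=
      le_antisymm (not_lt.mp hw) (prob_nonneg μ hμ0 _ w)
    rw [h0, zero_mul]

end IA

/-- For the instrumental causal structure. -/
theorem instrumental_observed_inequality
    {Ω a x y z : Type} [Fintype Ω] [Fintype a] [Fintype x] [Fintype y] [Fintype z]
    [DecidableEq a] [DecidableEq x] [DecidableEq y] [DecidableEq z]
    (μ : Ω → ℝ) (hμ : IsPMF μ)
    (A : Ω → a) (X : Ω → x) (Y : Ω → y) (Z : Ω → z)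
    (qY : a → z → y → ℝ) (qZ : a → x → z → ℝ)
    (hqY0 : ∀ av zv yv, 0 ≤ qY av zv yv) (hqY1 : ∀ av zv, ∑ yv, qY av zv yv = 1)
    (hqZ0 : ∀ av xv zv, 0 ≤ qZ av xv zv) (hqZ1 : ∀ av xv, ∑ zv, qZ av xv zv = 1)
    (hfact : ∀ (av : a) (xv : x) (yv : y) (zv : z),
      prob μ (fun ω => (A ω, X ω, Y ω, Z ω)) (av, xv, yv, zv)
        = qY av zv yv * qZ av xv zv * prob μ X xv * prob μ A av) :
    mutualInfo μ X (fun ω => (Y ω, Z ω)) ≤ ent μ Z := by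
  classical
  obtain ⟨hμ0, hμ1⟩ := hμ
  -- marginal computations
  have hF4 : ∀ (xv : x) (yv : y) (av : a) (zv : z),
      prob μ (fun ω => (X ω, Y ω, (A ω, Z ω))) (xv, yv, (av, zv))
        = qY av zv yv * qZ av xv zv * prob μ X xv * prob μ A av := by
    intro xv yv av zv
    have hinj : Function.Injective
        (fun w : a × x × y × z => (w.2.1, w.2.2.1, (w.1, w.2.2.2))) := by
      rintro ⟨a1, x1, y1, z1⟩ ⟨a2, x2, y2, z2⟩ h
      simp_all
    have h := IA.prob_comp_apply μ (fun ω => (A ω, X ω, Y ω, Z ω))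
      (fun w : a × x × y × z => (w.2.1, w.2.2.1, (w.1, w.2.2.2))) hinj (av, xv, yv, zv)
    rw [← hfact av xv yv zv]
    exact h
  have hF1 : ∀ (xv : x) (av : a) (zv : z),
      prob μ (fun ω => (X ω, (A ω, Z ω))) (xv, (av, zv))
        = qZ av xv zv * prob μ X xv * prob μ A av := by
    intro xv av zv
    have h := IA.prob_comp μ (fun ω => (A ω, X ω, Y ω, Z ω))
      (fun w : a × x × y × z => (w.2.1, (w.1, w.2.2.2))) (xv, (av, zv))
    rw [h]
    have e : ∀ w : a × x × y × z,
        (if ((w.2.1, (w.1, w.2.2.2)) : x × a × z) = (xv, (av, zv)) then prob μ (fun ω => (A ω, X ω, Y ω, Z ω)) w else 0)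
        = (if w.1 = av then (if w.2.1 = xv then (if w.2.2.2 = zv then prob μ (fun ω => (A ω, X ω, Y ω, Z ω)) w else 0) else 0) else 0) := by
      intro w
      by_cases h1 : w.1 = av <;> by_cases h2 : w.2.1 = xv <;> by_cases h3 : w.2.2.2 = zv <;>
        simp [Prod.ext_iff, h1, h2, h3]
    simp only [e]
    repeat simp only [Fintype.sum_prod_type, IA.sum_if_const, Finset.sum_ite_eq,
      Finset.sum_ite_eq', Finset.mem_univ, if_true]
    calc (∑ yv, prob μ (fun ω => (A ω, X ω, Y ω, Z ω)) (av, xv, yv, zv))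
        = ∑ yv, qY av zv yv * (qZ av xv zv * prob μ X xv * prob μ A av) :=
          Finset.sum_congr rfl fun yv _ => by rw [hfact]; ring
      _ = qZ av xv zv * prob μ X xv * prob μ A av := by
          rw [← Finset.sum_mul, hqY1, one_mul]
  have hF2 : ∀ (yv : y) (av : a) (zv : z),
      prob μ (fun ω => (Y ω, (A ω, Z ω))) (yv, (av, zv))
        = qY av zv yv * (∑ xv, qZ av xv zv * prob μ X xv) * prob μ A av := by
    intro yv av zv
    have h := IA.prob_comp μ (fun ω => (A ω, X ω, Y ω, Z ω))
      (fun w : a × x × y × z => (w.2.2.1, (w.1, w.2.2.2))) (yv, (av, zv))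
    rw [h]
    have e : ∀ w : a × x × y × z,
        (if ((w.2.2.1, (w.1, w.2.2.2)) : y × a × z) = (yv, (av, zv)) then prob μ (fun ω => (A ω, X ω, Y ω, Z ω)) w else 0)
        = (if w.1 = av then (if w.2.2.1 = yv then (if w.2.2.2 = zv then prob μ (fun ω => (A ω, X ω, Y ω, Z ω)) w else 0) else 0) else 0) := by
      intro w
      by_cases h1 : w.1 = av <;> by_cases h2 : w.2.2.1 = yv <;> by_cases h3 : w.2.2.2 = zv <;>
        simp [Prod.ext_iff, h1, h2, h3]
    simp only [e]
    repeat simp only [Fintype.sum_prod_type, IA.sum_if_const, Finset.sum_ite_eq,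
      Finset.sum_ite_eq', Finset.mem_univ, if_true]
    calc (∑ xv, prob μ (fun ω => (A ω, X ω, Y ω, Z ω)) (av, xv, yv, zv))
        = ∑ xv, (qZ av xv zv * prob μ X xv) * (qY av zv yv * prob μ A av) :=
          Finset.sum_congr rfl fun xv _ => by rw [hfact]; ring
      _ = qY av zv yv * (∑ xv, qZ av xv zv * prob μ X xv) * prob μ A av := by
          rw [← Finset.sum_mul]; ring
  have hF3 : ∀ (av : a) (zv : z),
      prob μ (fun ω => (A ω, Z ω)) (av, zv)
        = (∑ xv, qZ av xv zv * prob μ X xv) * prob μ A av := by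
    intro av zv
    have h := IA.prob_comp μ (fun ω => (A ω, X ω, Y ω, Z ω))
      (fun w : a × x × y × z => (w.1, w.2.2.2)) (av, zv)
    rw [h]
    have e : ∀ w : a × x × y × z,
        (if ((w.1, w.2.2.2) : a × z) = (av, zv) then prob μ (fun ω => (A ω, X ω, Y ω, Z ω)) w else 0)
        = (if w.1 = av then (if w.2.2.2 = zv then prob μ (fun ω => (A ω, X ω, Y ω, Z ω)) w else 0) else 0) := by
      intro w
      by_cases h1 : w.1 = av <;> by_cases h2 : w.2.2.2 = zv <;>
        simp [Prod.ext_iff, h1, h2]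
    simp only [e]
    repeat simp only [Fintype.sum_prod_type, IA.sum_if_const, Finset.sum_ite_eq,
      Finset.sum_ite_eq', Finset.mem_univ, if_true]
    calc (∑ xv, ∑ yv, prob μ (fun ω => (A ω, X ω, Y ω, Z ω)) (av, xv, yv, zv))
        = ∑ xv, qZ av xv zv * prob μ X xv * prob μ A av := by
          apply Finset.sum_congr rfl
          intro xv _
          calc (∑ yv, prob μ (fun ω => (A ω, X ω, Y ω, Z ω)) (av, xv, yv, zv))
              = ∑ yv, qY av zv yv * (qZ av xv zv * prob μ X xv * prob μ A av) :=
                Finset.sum_congr rfl fun yv _ => by rw [hfact]; ring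
            _ = qZ av xv zv * prob μ X xv * prob μ A av := by
                rw [← Finset.sum_mul, hqY1, one_mul]
      _ = (∑ xv, qZ av xv zv * prob μ X xv) * prob μ A av := by
          rw [Finset.sum_mul]
  have hF5 : ∀ (xv : x) (av : a),
      prob μ (fun ω => (X ω, A ω)) (xv, av) = prob μ X xv * prob μ A av := by
    intro xv av
    have hm := IA.marg_snd μ (fun ω => (X ω, A ω)) (fun ω => (Y ω, Z ω)) (xv, av)
    rw [← hm]
    have hinj : Function.Injective
        (fun w : a × x × y × z => ((w.2.1, w.1), (w.2.2.1, w.2.2.2))) := by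
      rintro ⟨a1, x1, y1, z1⟩ ⟨a2, x2, y2, z2⟩ hh
      simp_all
    have hc : ∀ w : y × z,
        prob μ (fun ω => ((X ω, A ω), (Y ω, Z ω))) ((xv, av), w)
          = prob μ (fun ω => (A ω, X ω, Y ω, Z ω)) (av, xv, w.1, w.2) := by
      intro w
      exact IA.prob_comp_apply μ (fun ω => (A ω, X ω, Y ω, Z ω))
        (fun v : a × x × y × z => ((v.2.1, v.1), (v.2.2.1, v.2.2.2))) hinj (av, xv, w.1, w.2)
    rw [Finset.sum_congr rfl (fun w (_ : w ∈ Finset.univ) => hc w), Fintype.sum_prod_type]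
    calc (∑ yv, ∑ zv, prob μ (fun ω => (A ω, X ω, Y ω, Z ω)) (av, xv, yv, zv))
        = ∑ zv, ∑ yv, prob μ (fun ω => (A ω, X ω, Y ω, Z ω)) (av, xv, yv, zv) :=
          Finset.sum_comm
      _ = ∑ zv, qZ av xv zv * (prob μ X xv * prob μ A av) := by
          apply Finset.sum_congr rfl
          intro zv _
          calc (∑ yv, prob μ (fun ω => (A ω, X ω, Y ω, Z ω)) (av, xv, yv, zv))
              = ∑ yv, qY av zv yv * (qZ av xv zv * (prob μ X xv * prob μ A av)) :=
                Finset.sum_congr rfl fun yv _ => by rw [hfact]; ring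
            _ = qZ av xv zv * (prob μ X xv * prob μ A av) := by
                rw [← Finset.sum_mul, hqY1, one_mul]
      _ = prob μ X xv * prob μ A av := by
          rw [← Finset.sum_mul, hqZ1, one_mul]
  -- chain rule decompositions
  have hA : mutualInfo μ X (fun ω => (Y ω, Z ω))
      = mutualInfo μ X (fun ω => (A ω, Y ω, Z ω))
        - condMutualInfo μ X A (fun ω => (Y ω, Z ω)) := by
    simp only [mutualInfo, condMutualInfo]
    ring
  have e1 : ent μ (fun ω => (A ω, Y ω, Z ω)) = ent μ (fun ω => (Y ω, (A ω, Z ω))) :=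
    IA.ent_congr μ
      ⟨fun w : y × a × z => (w.2.1, w.1, w.2.2), fun w : a × y × z => (w.2.1, w.1, w.2.2),
        fun w => rfl, fun w => rfl⟩
      (fun ω => (Y ω, (A ω, Z ω))) (fun ω => (A ω, Y ω, Z ω)) (fun ω => rfl)
  have e2 : ent μ (fun ω => (X ω, A ω, Y ω, Z ω))
      = ent μ (fun ω => (X ω, Y ω, (A ω, Z ω))) :=
    IA.ent_congr μ
      ⟨fun w : x × y × a × z => (w.1, w.2.2.1, w.2.1, w.2.2.2),
        fun w : x × a × y × z => (w.1, w.2.2.1, w.2.1, w.2.2.2),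
        fun w => rfl, fun w => rfl⟩
      (fun ω => (X ω, Y ω, (A ω, Z ω))) (fun ω => (X ω, A ω, Y ω, Z ω)) (fun ω => rfl)
  have hB : mutualInfo μ X (fun ω => (A ω, Y ω, Z ω))
      = mutualInfo μ X (fun ω => (A ω, Z ω))
        + condMutualInfo μ X Y (fun ω => (A ω, Z ω)) := by
    simp only [mutualInfo, condMutualInfo]
    rw [e1, e2]
    ring
  have hB0 : condMutualInfo μ X Y (fun ω => (A ω, Z ω)) = 0 := by
    apply IA.cmi_eq_zero μ hμ0
    rintro xv yv ⟨av, zv⟩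
    rw [hF4, hF3, hF1, hF2]
    ring
  have e3 : ent μ (fun ω => (Z ω, A ω)) = ent μ (fun ω => (A ω, Z ω)) :=
    IA.ent_congr μ (Equiv.prodComm a z)
      (fun ω => (A ω, Z ω)) (fun ω => (Z ω, A ω)) (fun ω => rfl)
  have e4 : ent μ (fun ω => (X ω, Z ω, A ω)) = ent μ (fun ω => (X ω, A ω, Z ω)) :=
    IA.ent_congr μ
      ⟨fun w : x × a × z => (w.1, w.2.2, w.2.1), fun w : x × z × a => (w.1, w.2.2, w.2.1),
        fun w => rfl, fun w => rfl⟩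
      (fun ω => (X ω, A ω, Z ω)) (fun ω => (X ω, Z ω, A ω)) (fun ω => rfl)
  have e5 : ent μ (fun ω => (X ω, A ω, Z ω)) = ent μ (fun ω => (X ω, (A ω, Z ω))) := rfl
  have hC : mutualInfo μ X (fun ω => (A ω, Z ω))
      = mutualInfo μ X A + condMutualInfo μ X Z A := by
    simp only [mutualInfo, condMutualInfo]
    rw [e3, e4]
    ring
  have hC0 : mutualInfo μ X A = 0 :=
    IA.mi_eq_zero μ hμ0 X A hF5
  have hD : condMutualInfo μ X Z A ≤ ent μ Z := by
    have m0 : ent μ (fun ω => (X ω, Z ω, A ω)) = ent μ (fun ω => (Z ω, (X ω, A ω))) :=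
      IA.ent_congr μ
        ⟨fun w : z × x × a => (w.2.1, w.1, w.2.2), fun w : x × z × a => (w.2.1, w.1, w.2.2),
          fun w => rfl, fun w => rfl⟩
        (fun ω => (Z ω, (X ω, A ω))) (fun ω => (X ω, Z ω, A ω)) (fun ω => rfl)
    have m1 : ent μ (fun ω => (X ω, A ω)) ≤ ent μ (fun ω => (Z ω, (X ω, A ω))) :=
      IA.ent_mono μ hμ0 Z (fun ω => (X ω, A ω))
    have m2 : (0:ℝ) ≤ mutualInfo μ Z A := IA.mi_nonneg μ hμ0 hμ1 Z A
    have m2' : (0:ℝ) ≤ ent μ Z + ent μ A - ent μ (fun ω => (Z ω, A ω)) := m2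
    show ent μ (fun ω => (X ω, A ω)) + ent μ (fun ω => (Z ω, A ω)) - ent μ A
        - ent μ (fun ω => (X ω, Z ω, A ω)) ≤ ent μ Z
    rw [m0]
    linarith [m1, m2']
  have hcmi1 : (0:ℝ) ≤ condMutualInfo μ X A (fun ω => (Y ω, Z ω)) :=
    IA.cmi_nonneg μ hμ0 hμ1 X A (fun ω => (Y ω, Z ω))
  linarith [hA, hB, hB0, hC, hC0, hD, hcmi1]
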